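/- Let E/F be a finite Galois extension of fields with Galois group Γ, and let G be a group. Suppose that for each γ ∈ Γ we are given a character χ_γ : G → Eˣ, and that the cocycle relation χ_{γδ}(g) = χ_γ(g) · γ(χ_δ(g)) holds for all γ, δ ∈ Γ and g ∈ G. Then there exists a function α : G → Eˣ such that γ(α(g)) / α(g) = χ_γ(g) for all γ ∈ Γ and g ∈ G, and the induced map from G to the quotient group Eˣ / (image of Fˣ in Eˣ), sending g to the coset of α(g), is a group homomorphism. -/

import Mathlib

open Matrix

/-- Hilbert 90 applied to a cocycle family of characters: given a finite Galois extension
`E/F` with Galois group `Γ` and characters `χ_γ : G → Eˣ` satisfying the cocycle relation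
`χ_{γδ}(g) = χ_γ(g) · γ(χ_δ(g))`, there is `α : G → Eˣ` with `γ(α(g))/α(g) = χ_γ(g)` for
all `γ, g`, and `g ↦ α(g) mod Fˣ` is a homomorphism `G → Eˣ/Fˣ`. -/
theorem hilbert90_cocycle_characters (F E : Type*) [Field F] [Field E] [Algebra F E]
    [FiniteDimensional F E] [IsGalois F E] (G : Type*) [Group G]
    (χ : (E ≃ₐ[F] E) → (G →* Eˣ))
    (hcoc : ∀ (γ δ : E ≃ₐ[F] E) (g : G),
      χ (γ * δ) g = χ γ g * Units.map (γ : E →* E) (χ δ g)) :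
    ∃ α : G → Eˣ,
      (∀ (γ : E ≃ₐ[F] E) (g : G), Units.map (γ : E →* E) (α g) / α g = χ γ g) ∧
      (∀ g₁ g₂ : G,
        (QuotientGroup.mk (α (g₁ * g₂)) :
            Eˣ ⧸ (Units.map (algebraMap F E : F →* E)).range)
          = QuotientGroup.mk (α g₁) * QuotientGroup.mk (α g₂)) := by
  -- For each `g`, apply Hilbert 90 to the cocycle `γ ↦ χ γ g`.
  have key : ∀ g : G, ∃ β : Eˣ, ∀ γ : E ≃ₐ[F] E,
      Units.map (γ : E →* E) β / β = χ γ g := by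
    intro g
    have hc : groupCohomology.IsMulCocycle₁ (fun γ : E ≃ₐ[F] E => χ γ g) := by
      intro γ δ
      show χ (γ * δ) g = γ • χ δ g * χ γ g
      rw [AlgEquiv.smul_units_def, hcoc γ δ g, mul_comm]
    obtain ⟨β, hβ⟩ :=
      groupCohomology.isMulCoboundary₁_of_isMulCocycle₁_of_aut_to_units _ hc
    exact ⟨β, fun γ => hβ γ⟩
  choose α hα using key
  refine ⟨α, fun γ g => hα g γ, fun g₁ g₂ => ?_⟩
  -- The defect `α (g₁g₂) / (α g₁ * α g₂)` is fixed by all of `Γ`, hence lies in `Fˣ`.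
  have hfix : ∀ γ : E ≃ₐ[F] E,
      γ ((α (g₁ * g₂) / (α g₁ * α g₂) : Eˣ) : E) = ((α (g₁ * g₂) / (α g₁ * α g₂) : Eˣ) : E) := by
    intro γ
    have h1 := hα (g₁ * g₂) γ
    have h2 := hα g₁ γ
    have h3 := hα g₂ γ
    have hx : Units.map (γ : E →* E) (α (g₁ * g₂) / (α g₁ * α g₂))
        = α (g₁ * g₂) / (α g₁ * α g₂) := by
      have : χ γ (g₁ * g₂) = χ γ g₁ * χ γ g₂ := _root_.map_mul _ _ _
      rw [map_div, _root_.map_mul]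
      rw [div_eq_iff_eq_mul] at h1 h2 h3
      rw [h1, h2, h3, this]
      have hrearr : (χ γ) g₁ * α g₁ * ((χ γ) g₂ * α g₂)
          = (χ γ) g₁ * (χ γ) g₂ * (α g₁ * α g₂) := by
        simp [mul_comm, mul_assoc, mul_left_comm]
      rw [← mul_assoc ((χ γ) g₁ * α g₁)] at hrearr ⊢
      rw [hrearr]
      exact mul_div_mul_left_eq_div _ _ _
    exact congrArg Units.val hx
  have hbot : ((α (g₁ * g₂) / (α g₁ * α g₂) : Eˣ) : E) ∈ (⊥ : IntermediateField F E) := by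
    have hf : IntermediateField.fixedField (⊤ : Subgroup (E ≃ₐ[F] E)) = ⊥ :=
      ((IsGalois.tfae (F := F) (E := E)).out 0 1).mp (inferInstance : IsGalois F E)
    rw [← hf]
    exact fun ⟨γ, _⟩ => hfix γ
  obtain ⟨x, hx⟩ := IntermediateField.mem_bot.mp hbot
  have hx0 : x ≠ 0 := by
    intro h
    apply Units.ne_zero (α (g₁ * g₂) / (α g₁ * α g₂))
    rw [← hx, h, map_zero]
  have hmem : α (g₁ * g₂) / (α g₁ * α g₂) ∈ (Units.map (algebraMap F E : F →* E)).range := by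
    refine ⟨Units.mk0 x hx0, ?_⟩
    ext
    exact hx
  rw [← QuotientGroup.mk_mul]
  refine QuotientGroup.eq.mpr ?_
  have := (Subgroup.inv_mem_iff _).mpr hmem
  simpa [div_eq_mul_inv, _root_.mul_inv_rev, mul_comm, mul_assoc] using this
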